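/- Let q be a prime, n, m, k positive integers, and p ≥ 1, η ≥ 1 real numbers with (q : ℝ) > 2η. Let A be an n×m matrix over F_q and y ∈ F_qⁿ, and let Ā ∈ ℤ^{n×m}, ȳ ∈ ℤⁿ be their entrywise lifts with entries in {0,…,q−1}. Let a be a positive integer with (a : ℝ) > 2ηk + 1. Define A' ∈ ℤ^{(an+m+k)×(m+n)} as the block matrix whose first a·n rows consist of a vertically stacked copies of the matrix [Ā | q·Id_n], whose next m rows are [Id_m | 0_{m×n}], and whose last k rows are zero; define y' ∈ ℤ^{an+m+k} as a stacked copies of ȳ, followed by 0_m, followed by 1_k (the all-ones vector of length k). Then: (YES) if there exists x ∈ F_q^m with every entry equal to 0 or 1, with ‖x‖₀ ≤ k and A·x = y, then there exists x' ∈ ℤ^{m+n} with ‖A'·x' − y'‖_p^p ≤ 2k; and (NO) if A·x ≠ y for every x ∈ F_q^m with ‖x‖₀ ≤ 2ηk, then ‖A'·x' − w·y'‖_p^p > 2ηk for every x' ∈ ℤ^{m+n} and every nonzero integer w. -/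
import Mathlib

set_option maxHeartbeats 1000000 in
theorem stmt17 (q : ℕ) (hq : q.Prime) (n m k : ℕ) (hn : 0 < n) (hm : 0 < m) (hk : 0 < k)
    (p η : ℝ) (hp : 1 ≤ p) (hη : 1 ≤ η) (hqη : (q : ℝ) > 2 * η)
    (A : Matrix (Fin n) (Fin m) (ZMod q)) (y : Fin n → ZMod q)
    (a : ℕ) (ha : 0 < a) (hak : (a : ℝ) > 2 * η * k + 1)
    (A' : Matrix ((Fin a × Fin n) ⊕ (Fin m ⊕ Fin k)) (Fin m ⊕ Fin n) ℤ)
    (hA' : A' = Matrix.of fun i j =>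
      match i, j with
      | Sum.inl (_, i), Sum.inl j => ((A i j).val : ℤ)
      | Sum.inl (_, i), Sum.inr j => if i = j then (q : ℤ) else 0
      | Sum.inr (Sum.inl i), Sum.inl j => if i = j then 1 else 0
      | Sum.inr (Sum.inl _), Sum.inr _ => 0
      | Sum.inr (Sum.inr _), _ => 0)
    (y' : ((Fin a × Fin n) ⊕ (Fin m ⊕ Fin k)) → ℤ)
    (hy' : y' = fun i =>
      match i with
      | Sum.inl (_, i) => ((y i).val : ℤ)
      | Sum.inr (Sum.inl _) => 0
      | Sum.inr (Sum.inr _) => 1) :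
    ((∃ x : Fin m → ZMod q, (∀ i, x i = 0 ∨ x i = 1) ∧ hammingNorm x ≤ k ∧
        A.mulVec x = y) →
      ∃ x' : Fin m ⊕ Fin n → ℤ, ∑ i, |((A'.mulVec x' - y') i : ℝ)| ^ p ≤ 2 * k) ∧
    ((∀ x : Fin m → ZMod q, (hammingNorm x : ℝ) ≤ 2 * η * k → A.mulVec x ≠ y) →
      ∀ (x' : Fin m ⊕ Fin n → ℤ) (w : ℤ), w ≠ 0 →
        2 * η * k < ∑ i, |((A'.mulVec x' - w • y') i : ℝ)| ^ p) := by
  haveI : Fact q.Prime := ⟨hq⟩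
  haveI : NeZero q := ⟨hq.ne_zero⟩
  have hq1 : 1 < q := hq.one_lt
  haveI : Fact (1 < q) := ⟨hq1⟩
  have hp0 : (0:ℝ) ≤ p := le_trans zero_le_one hp
  have hpne : p ≠ 0 := by positivity
  have key1 : ∀ t : ℤ, t ≠ 0 → (1:ℝ) ≤ |(t:ℝ)| ^ p := by
    intro t ht
    have h1 : (1:ℝ) ≤ |(t:ℝ)| := by
      rw [← Int.cast_abs]; exact_mod_cast Int.one_le_abs ht
    calc (1:ℝ) = 1 ^ p := (Real.one_rpow p).symm
    _ ≤ |(t:ℝ)| ^ p := Real.rpow_le_rpow zero_le_one h1 hp0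
  have htop : ∀ (x' : Fin m ⊕ Fin n → ℤ) (c : Fin a) (i : Fin n),
      A'.mulVec x' (Sum.inl (c,i)) =
        (∑ j, ((A i j).val : ℤ) * x' (Sum.inl j)) + q * x' (Sum.inr i) := by
    intro x' c i
    subst hA'
    simp [Matrix.mulVec, dotProduct, Fintype.sum_sum_type, ite_mul, Finset.sum_ite_eq]
  have hmid : ∀ (x' : Fin m ⊕ Fin n → ℤ) (i : Fin m),
      A'.mulVec x' (Sum.inr (Sum.inl i)) = x' (Sum.inl i) := by
    intro x' i
    subst hA'
    simp [Matrix.mulVec, dotProduct, Fintype.sum_sum_type, ite_mul, Finset.sum_ite_eq]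
  have hbot : ∀ (x' : Fin m ⊕ Fin n → ℤ) (i : Fin k),
      A'.mulVec x' (Sum.inr (Sum.inr i)) = 0 := by
    intro x' i
    subst hA'
    simp [Matrix.mulVec, dotProduct, Fintype.sum_sum_type, ite_mul, Finset.sum_ite_eq]
  have hy1 : ∀ (c : Fin a) (i : Fin n), y' (Sum.inl (c, i)) = ((y i).val : ℤ) := by
    intro c i; rw [hy']
  have hy2 : ∀ i : Fin m, y' (Sum.inr (Sum.inl i)) = 0 := by
    intro i; rw [hy']
  have hy3 : ∀ i : Fin k, y' (Sum.inr (Sum.inr i)) = 1 := by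
    intro i; rw [hy']
  clear hy'
  constructor
  · rintro ⟨x, hx01, hxk, hAx⟩
    have hdvd : ∀ i : Fin n,
        (q:ℤ) ∣ ((y i).val : ℤ) - ∑ j, ((A i j).val : ℤ) * ((x j).val : ℤ) := by
      intro i
      rw [← ZMod.intCast_zmod_eq_zero_iff_dvd]
      push_cast
      simp only [ZMod.natCast_val, ZMod.cast_id]
      have := congrFun hAx i
      simp only [Matrix.mulVec, dotProduct] at this
      rw [this]; ring
    choose z hz using hdvd
    set x' : Fin m ⊕ Fin n → ℤ := Sum.elim (fun j => ((x j).val : ℤ)) z with hxd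
    refine ⟨x', ?_⟩
    rw [Fintype.sum_sum_type, Fintype.sum_sum_type]
    have hT : ∀ ci : Fin a × Fin n, |(((A'.mulVec x' - y') (Sum.inl ci) : ℤ) : ℝ)| ^ p = 0 := by
      rintro ⟨c, i⟩
      have h0 : (A'.mulVec x' - y') (Sum.inl (c, i)) = 0 := by
        simp only [Pi.sub_apply, htop, hy1, hxd, Sum.elim_inl, Sum.elim_inr]
        have := hz i
        omega
      rw [h0]
      simp [Real.zero_rpow hpne]
    have hM : ∀ i : Fin m, |(((A'.mulVec x' - y') (Sum.inr (Sum.inl i)) : ℤ) : ℝ)| ^ p ≤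
        if x i ≠ 0 then 1 else 0 := by
      intro i
      simp only [Pi.sub_apply, hmid, hy2, hxd, Sum.elim_inl, sub_zero]
      rcases hx01 i with h | h
      · simp [h, Real.zero_rpow hpne]
      · have hne : x i ≠ 0 := by rw [h]; exact one_ne_zero
        simp [h, hne, ZMod.val_one, Real.one_rpow]
    have hB : ∀ i : Fin k, |(((A'.mulVec x' - y') (Sum.inr (Sum.inr i)) : ℤ) : ℝ)| ^ p = 1 := by
      intro i
      simp only [Pi.sub_apply, hbot, hy3]
      norm_num [Real.one_rpow]
    rw [Fintype.sum_congr _ _ hT, Fintype.sum_congr _ _ hB]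
    simp only [Finset.sum_const_zero, Finset.sum_const, Finset.card_univ, Fintype.card_fin,
      nsmul_eq_mul, mul_one, zero_add]
    have h1 : ∑ i : Fin m, |(((A'.mulVec x' - y') (Sum.inr (Sum.inl i)) : ℤ) : ℝ)| ^ p ≤ (k : ℝ) := by
      calc _ ≤ ∑ i : Fin m, if x i ≠ 0 then (1:ℝ) else 0 :=
            Finset.sum_le_sum (fun i _ => hM i)
        _ = ((Finset.univ.filter (fun i => x i ≠ 0)).card : ℝ) := by
            rw [Finset.sum_boole]
        _ ≤ (k : ℝ) := by exact_mod_cast hxk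
    linarith
  · intro hno x' w hw
    by_contra hcon
    push_neg at hcon
    set f : ((Fin a × Fin n) ⊕ (Fin m ⊕ Fin k)) → ℝ :=
      fun i => |((A'.mulVec x' - w • y') i : ℝ)| ^ p with hf
    have hfnn : ∀ i, 0 ≤ f i := fun i => Real.rpow_nonneg (abs_nonneg _) p
    have hsplit : ∑ i, f i = (∑ ci : Fin a × Fin n, f (Sum.inl ci)) +
        ((∑ i : Fin m, f (Sum.inr (Sum.inl i))) + (∑ i : Fin k, f (Sum.inr (Sum.inr i)))) := by
      rw [Fintype.sum_sum_type, Fintype.sum_sum_type]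
    have hTle : (∑ ci : Fin a × Fin n, f (Sum.inl ci)) ≤ 2 * η * k := by
      refine le_trans ?_ hcon
      rw [hsplit]
      have : 0 ≤ (∑ i : Fin m, f (Sum.inr (Sum.inl i))) + (∑ i : Fin k, f (Sum.inr (Sum.inr i))) := by
        positivity
      linarith
    have hMle : (∑ i : Fin m, f (Sum.inr (Sum.inl i))) ≤ 2 * η * k := by
      refine le_trans ?_ hcon
      rw [hsplit]
      have h1 : 0 ≤ ∑ ci : Fin a × Fin n, f (Sum.inl ci) := by positivity
      have h2 : 0 ≤ ∑ i : Fin k, f (Sum.inr (Sum.inr i)) := by positivity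
      linarith
    have hBle : (∑ i : Fin k, f (Sum.inr (Sum.inr i))) ≤ 2 * η * k := by
      refine le_trans ?_ hcon
      rw [hsplit]
      have h1 : 0 ≤ ∑ ci : Fin a × Fin n, f (Sum.inl ci) := by positivity
      have h2 : 0 ≤ ∑ i : Fin m, f (Sum.inr (Sum.inl i)) := by positivity
      linarith
    have hBval : ∀ i : Fin k, f (Sum.inr (Sum.inr i)) = |(w:ℝ)| ^ p := by
      intro i
      simp only [hf, Pi.sub_apply, hbot, Pi.smul_apply, hy3, smul_eq_mul, mul_one, zero_sub,
        Int.cast_neg, abs_neg]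
    have hqw : ¬ (q:ℤ) ∣ w := by
      intro hdvd
      have habs : (q:ℝ) ≤ |(w:ℝ)| := by
        rw [← Int.cast_abs]
        exact_mod_cast Int.le_of_dvd (abs_pos.mpr hw) ((dvd_abs _ _).mpr hdvd)
      have h1 : (q:ℝ) ≤ |(w:ℝ)| ^ p := by
        calc (q:ℝ) ≤ |(w:ℝ)| := habs
        _ = |(w:ℝ)| ^ (1:ℝ) := (Real.rpow_one _).symm
        _ ≤ |(w:ℝ)| ^ p := Real.rpow_le_rpow_of_exponent_le
            (le_trans (by exact_mod_cast hq1.le) habs) hp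
      have h2 : (k:ℝ) * q ≤ ∑ i : Fin k, f (Sum.inr (Sum.inr i)) := by
        rw [Fintype.sum_congr _ _ hBval]
        simp only [Finset.sum_const, Finset.card_univ, Fintype.card_fin, nsmul_eq_mul]
        exact mul_le_mul_of_nonneg_left h1 (by positivity)
      have hk1 : (1:ℝ) ≤ (k:ℝ) := by exact_mod_cast hk
      nlinarith [hBle]
    have hr : ∀ i : Fin n,
        (∑ j, ((A i j).val : ℤ) * x' (Sum.inl j)) + q * x' (Sum.inr i) - w * ((y i).val : ℤ) = 0 := by
      intro i
      by_contra hri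
      have hval : ∀ c : Fin a, f (Sum.inl (c, i)) =
          |(((∑ j, ((A i j).val : ℤ) * x' (Sum.inl j)) + q * x' (Sum.inr i)
            - w * ((y i).val : ℤ) : ℤ) : ℝ)| ^ p := by
        intro c
        simp only [hf, Pi.sub_apply, htop, Pi.smul_apply, hy1, smul_eq_mul]
      have hge : (a:ℝ) ≤ ∑ ci : Fin a × Fin n, f (Sum.inl ci) := by
        rw [Fintype.sum_prod_type]
        have hinner : ∀ c : Fin a, (1:ℝ) ≤ ∑ i' : Fin n, f (Sum.inl (c, i')) := by
          intro c
          calc (1:ℝ) ≤ f (Sum.inl (c, i)) := by rw [hval c]; exact key1 _ hri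
          _ ≤ ∑ i' : Fin n, f (Sum.inl (c, i')) :=
              Finset.single_le_sum (f := fun i' => f (Sum.inl (c, i')))
                (fun i' _ => hfnn _) (Finset.mem_univ i)
        calc (a:ℝ) = ∑ _c : Fin a, (1:ℝ) := by simp
        _ ≤ _ := Finset.sum_le_sum (fun c _ => hinner c)
      linarith
    set v : Fin m → ZMod q := fun j => ((x' (Sum.inl j) : ZMod q)) with hv
    have hmv : A.mulVec v = (w : ZMod q) • y := by
      funext i
      have h0 : (((∑ j, ((A i j).val : ℤ) * x' (Sum.inl j)) + q * x' (Sum.inr i)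
          - w * ((y i).val : ℤ) : ℤ) : ZMod q) = 0 := by rw [hr i]; simp
      push_cast at h0
      simp only [ZMod.natCast_val, ZMod.cast_id, ZMod.natCast_self, zero_mul, add_zero] at h0
      simp only [Matrix.mulVec, dotProduct, Pi.smul_apply, smul_eq_mul, hv]
      linear_combination h0
    set w' : ZMod q := (w : ZMod q) with hw'
    have hw'0 : w' ≠ 0 := fun h => hqw ((ZMod.intCast_zmod_eq_zero_iff_dvd w q).mp h)
    set xx : Fin m → ZMod q := w'⁻¹ • v with hxx
    have hAxx : A.mulVec xx = y := by
      rw [hxx, Matrix.mulVec_smul, hmv, smul_smul, inv_mul_cancel₀ hw'0, one_smul]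
    have hsub : (Finset.univ.filter (fun j => xx j ≠ 0)) ⊆
        (Finset.univ.filter (fun j => x' (Sum.inl j) ≠ 0)) := by
      intro j hj
      simp only [Finset.mem_filter, Finset.mem_univ, true_and] at hj ⊢
      intro h0
      apply hj
      simp [hxx, hv, h0]
    have hcard : (hammingNorm xx : ℝ) ≤
        ((Finset.univ.filter (fun j => x' (Sum.inl j) ≠ 0)).card : ℝ) := by
      exact_mod_cast Finset.card_le_card hsub
    have hMge : ((Finset.univ.filter (fun j => x' (Sum.inl j) ≠ 0)).card : ℝ) ≤
        ∑ i : Fin m, f (Sum.inr (Sum.inl i)) := by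
      have hMval : ∀ i : Fin m, f (Sum.inr (Sum.inl i)) = |((x' (Sum.inl i) : ℤ) : ℝ)| ^ p := by
        intro i
        simp only [hf, Pi.sub_apply, hmid, Pi.smul_apply, hy2, smul_eq_mul, mul_zero, sub_zero]
      calc ((Finset.univ.filter (fun j => x' (Sum.inl j) ≠ 0)).card : ℝ)
          = ∑ j ∈ Finset.univ.filter (fun j => x' (Sum.inl j) ≠ 0), (1:ℝ) := by simp
        _ ≤ ∑ j ∈ Finset.univ.filter (fun j => x' (Sum.inl j) ≠ 0), f (Sum.inr (Sum.inl j)) := by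
            refine Finset.sum_le_sum (fun j hj => ?_)
            simp only [Finset.mem_filter, Finset.mem_univ, true_and] at hj
            rw [hMval j]; exact key1 _ hj
        _ ≤ ∑ i : Fin m, f (Sum.inr (Sum.inl i)) :=
            Finset.sum_le_sum_of_subset_of_nonneg (Finset.filter_subset _ _)
              (fun i _ _ => hfnn _)
    exact hno xx (by linarith) hAxx
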